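/- For any graded poset P of rank n+1 and real k > 0, the k-Möbius function satisfies μ_k(P) = −∑_{S⊆[1,n]} (−1/k)^{|S|} f_S(P). -/

import Mathlib

open scoped Classical

attribute [local instance] Fintype.ofFinite

/-- A rank function making a bounded poset graded of rank `n+1`. -/
def IsGraded (P : Type) [PartialOrder P] [BoundedOrder P] (ρ : P → ℕ) (n : ℕ) : Prop :=
  ρ ⊥ = 0 ∧ ρ ⊤ = n + 1 ∧ ∀ x y : P, x ⋖ y → ρ y = ρ x + 1

/-- A poset is `r`-thick if every nonempty open interval has at least `r` elements. -/
def RThick (P : Type) [PartialOrder P] [Fintype P] (r : ℕ) : Prop :=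
  ∀ x y : P, x < y → (∃ z, x < z ∧ z < y) →
    r ≤ (Finset.univ.filter fun z => x < z ∧ z < y).card

/-- The flag number `f_S(P)`: the number of chains of `P` whose set of ranks is `S`. -/
noncomputable def flagNum {P : Type} [PartialOrder P] [Fintype P] (ρ : P → ℕ)
    (S : Finset ℕ) : ℕ :=
  (Finset.univ.filter fun c : Finset P =>
    IsChain (· ≤ ·) (c : Set P) ∧ c.image ρ = S ∧ c.card = S.card).card

/-- The flag number `f_S([x,y])` of the interval `[x,y]`, with ranks relative to `x`. -/
noncomputable def flagNumI {P : Type} [PartialOrder P] [Fintype P] (ρ : P → ℕ)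
    (x y : P) (S : Finset ℕ) : ℕ :=
  (Finset.univ.filter fun c : Finset P =>
    IsChain (· ≤ ·) (c : Set P) ∧ (∀ z ∈ c, x < z ∧ z < y) ∧
      c.image (fun z => ρ z - ρ x) = S ∧ c.card = S.card).card

/-- The `k`-Möbius function `μ_k([x,y])`. -/
noncomputable def muk {P : Type} [PartialOrder P] [Fintype P] (k : ℝ) (x : P) (y : P) : ℝ :=
  if x = y then 1
  else -1 - (1/k) * ∑ z ∈ (Finset.univ.filter fun z => x < z ∧ z < y).attach,
    muk k x z.val
termination_by (Finset.univ.filter fun w => w < y).card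
decreasing_by
  have hz : (z : P) < y := (Finset.mem_filter.mp z.2).2.2
  apply Finset.card_lt_card
  rw [Finset.ssubset_iff_of_subset]
  · exact ⟨z, Finset.mem_filter.mpr ⟨Finset.mem_univ _, hz⟩,
      fun hc => absurd (Finset.mem_filter.mp hc).2 (lt_irrefl _)⟩
  · intro w hw
    exact Finset.mem_filter.mpr ⟨Finset.mem_univ _, (Finset.mem_filter.mp hw).2.trans hz⟩

/-- The ordinary Möbius function of a finite poset. -/
noncomputable def mobius {P : Type} [PartialOrder P] [Fintype P] (x : P) (y : P) : ℤ :=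
  if x = y then 1
  else -∑ z ∈ (Finset.univ.filter fun z => x ≤ z ∧ z < y).attach, mobius x z.val
termination_by (Finset.univ.filter fun w => w < y).card
decreasing_by
  have hz : (z : P) < y := (Finset.mem_filter.mp z.2).2.2
  apply Finset.card_lt_card
  rw [Finset.ssubset_iff_of_subset]
  · exact ⟨z, Finset.mem_filter.mpr ⟨Finset.mem_univ _, hz⟩,
      fun hc => absurd (Finset.mem_filter.mp hc).2 (lt_irrefl _)⟩
  · intro w hw
    exact Finset.mem_filter.mpr ⟨Finset.mem_univ _, (Finset.mem_filter.mp hw).2.trans hz⟩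

/-- A graded poset is `k`-Eulerian when `μ_k([x,y]) = (-1)^{ρ(y)-ρ(x)}` on every interval. -/
def IsKEulerian (P : Type) [PartialOrder P] [Fintype P] (ρ : P → ℕ) (k : ℝ) : Prop :=
  ∀ x y : P, x ≤ y → muk k x y = (-1 : ℝ) ^ (ρ y - ρ x)

/-- The flag `L^k` vector of a poset of rank `n+1`. -/
noncomputable def Lk {P : Type} [PartialOrder P] [Fintype P] (k : ℝ) (n : ℕ) (ρ : P → ℕ)
    (S : Finset ℕ) : ℝ :=
  (-1 : ℝ) ^ (n - S.card) *
    ∑ T ∈ (Finset.Icc 1 n).powerset.filter (fun T => Finset.Icc 1 n \ S ⊆ T),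
      (-(1/(2*k))) ^ T.card * (flagNum ρ T : ℝ)

/-- The flag `L^k` vector of an interval `[x,y]` of rank `n+1`. -/
noncomputable def LkI {P : Type} [PartialOrder P] [Fintype P] (k : ℝ) (n : ℕ) (ρ : P → ℕ)
    (x y : P) (S : Finset ℕ) : ℝ :=
  (-1 : ℝ) ^ (n - S.card) *
    ∑ T ∈ (Finset.Icc 1 n).powerset.filter (fun T => Finset.Icc 1 n \ S ⊆ T),
      (-(1/(2*k))) ^ T.card * (flagNumI ρ x y T : ℝ)

/-- A set is even if it is a disjoint union of intervals of even cardinality. -/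
def IsEvenSet (S : Finset ℕ) : Prop :=
  ∃ J : Finset (ℕ × ℕ),
    S = J.biUnion (fun p => Finset.Icc p.1 p.2) ∧
    (∀ p ∈ J, p.1 ≤ p.2 ∧ Even (p.2 + 1 - p.1)) ∧
    (∀ p ∈ J, ∀ q ∈ J, p ≠ q → Disjoint (Finset.Icc p.1 p.2) (Finset.Icc q.1 q.2))

/-- The horizontal `r`-fold duplication `D^r P`. -/
inductive Dup (P : Type) [PartialOrder P] [BoundedOrder P] (r : ℕ) : Type where
  | bot : Dup P r
  | top : Dup P r
  | mid : {x : P // x ≠ ⊥ ∧ x ≠ ⊤} → Fin r → Dup P r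

namespace Dup

variable {P : Type} [PartialOrder P] [BoundedOrder P] {r : ℕ}

def le : Dup P r → Dup P r → Prop
  | .bot, _ => True
  | .mid _ _, .bot => False
  | .mid x i, .mid y j => (x = y ∧ i = j) ∨ (x : P) < (y : P)
  | .mid _ _, .top => True
  | .top, .top => True
  | .top, _ => False

instance : PartialOrder (Dup P r) where
  le := Dup.le
  le_refl a := by cases a with
    | bot => trivial
    | top => trivial
    | mid x i => exact Or.inl ⟨rfl, rfl⟩
  le_trans a b c hab hbc := by
    cases a with
    | bot => trivial
    | top =>
      cases b with
      | top =>
        cases c with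
        | top => trivial
        | bot => exact hbc.elim
        | mid _ _ => exact hbc.elim
      | bot => exact hab.elim
      | mid _ _ => exact hab.elim
    | mid x i =>
      cases b with
      | bot => exact hab.elim
      | top =>
        cases c with
        | top => trivial
        | bot => exact hbc.elim
        | mid _ _ => exact hbc.elim
      | mid y j =>
        cases c with
        | bot => exact hbc.elim
        | top => trivial
        | mid z l =>
          rcases hab with ⟨rfl, rfl⟩ | h1
          · exact hbc
          · rcases hbc with ⟨rfl, rfl⟩ | h2
            · exact Or.inr h1
            · exact Or.inr (h1.trans h2)
  le_antisymm a b hab hba := by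
    cases a with
    | bot =>
      cases b with
      | bot => rfl
      | top => exact hba.elim
      | mid _ _ => exact hba.elim
    | top =>
      cases b with
      | top => rfl
      | bot => exact hab.elim
      | mid _ _ => exact hab.elim
    | mid x i =>
      cases b with
      | bot => exact hab.elim
      | top => exact hba.elim
      | mid y j =>
        rcases hab with ⟨rfl, rfl⟩ | h1
        · rfl
        · rcases hba with ⟨rfl, rfl⟩ | h2
          · exact absurd h1 (lt_irrefl _)
          · exact absurd (h1.trans h2) (lt_irrefl _)

instance : BoundedOrder (Dup P r) where
  top := .top
  bot := .bot
  le_top a := by cases a <;> trivial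
  bot_le a := trivial

instance [Finite P] : Finite (Dup P r) :=
  Finite.of_injective
    (fun a : Dup P r =>
      (match a with
        | .bot => none
        | .top => some none
        | .mid x i => some (some (x, i)) :
        Option (Option ({x : P // x ≠ ⊥ ∧ x ≠ ⊤} × Fin r))))
    (by intro a b h; cases a <;> cases b <;> simp_all)

/-- The rank function of `D^r P`, where `P` has rank `n+1`. -/
def rank (ρ : P → ℕ) (n : ℕ) : Dup P r → ℕ
  | .bot => 0
  | .top => n + 1
  | .mid x _ => ρ x.val

/-- `a ∈ D^r P` is a copy of `x ∈ P`. -/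
def IsCopy (a : Dup P r) (x : P) : Prop :=
  (x = ⊥ ∧ a = .bot) ∨ (x = ⊤ ∧ a = .top) ∨ ∃ h i, a = .mid ⟨x, h⟩ i

end Dup

section HallAux

variable {P : Type} [PartialOrder P] [Fintype P]

/-- The set of chains lying in the open interval `(x, y)`. -/
noncomputable def chainSet (x y : P) : Finset (Finset P) :=
  Finset.univ.filter fun c => IsChain (· ≤ ·) (c : Set P) ∧ ∀ z ∈ c, x < z ∧ z < y

/-- The chain-counting generating sum. -/
noncomputable def Nk (k : ℝ) (x y : P) : ℝ :=
  ∑ c ∈ chainSet x y, (-(1/k)) ^ c.card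

lemma empty_mem_chainSet (x y : P) : (∅ : Finset P) ∈ chainSet x y := by
  simp [chainSet, IsChain.empty]

lemma exists_greatest_of_chain {c : Finset P} (hc : IsChain (· ≤ ·) (c : Set P))
    (hne : c.Nonempty) : ∃ m ∈ c, ∀ b ∈ c, b ≤ m := by
  obtain ⟨m, hm, hmax⟩ := c.exists_maximal hne
  refine ⟨m, hm, fun b hb => ?_⟩
  rcases eq_or_ne b m with rfl | hbm
  · exact le_rfl
  · rcases hc hb hm hbm with h | h
    · exact h
    · rcases lt_or_eq_of_le h with h' | h'
      · exact absurd h' (not_lt_of_ge (hmax hb h'.le))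
      · exact h'.ge

/-- A greatest element of a finset, with a default fallback. -/
noncomputable def gmax (x₀ : P) (c : Finset P) : P :=
  if h : ∃ m ∈ c, ∀ b ∈ c, b ≤ m then h.choose else x₀

lemma gmax_spec {x₀ : P} {c : Finset P} (h : ∃ m ∈ c, ∀ b ∈ c, b ≤ m) :
    gmax x₀ c ∈ c ∧ ∀ b ∈ c, b ≤ gmax x₀ c := by
  rw [gmax, dif_pos h]
  exact ⟨h.choose_spec.1, h.choose_spec.2⟩

lemma gmax_eq {x₀ : P} {c : Finset P} {m : P} (hm : m ∈ c) (hmax : ∀ b ∈ c, b ≤ m) :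
    gmax x₀ c = m := by
  have h : ∃ m ∈ c, ∀ b ∈ c, b ≤ m := ⟨m, hm, hmax⟩
  obtain ⟨h1, h2⟩ := gmax_spec (x₀ := x₀) h
  exact le_antisymm (hmax _ h1) (h2 m hm)

lemma Nk_rec (k : ℝ) (x y : P) :
    Nk k x y = 1 + (-(1/k)) *
      ∑ z ∈ Finset.univ.filter (fun z => x < z ∧ z < y), Nk k x z := by
  classical
  set O := Finset.univ.filter (fun z => x < z ∧ z < y) with hO
  have hsplit := Finset.sum_filter_add_sum_filter_not (chainSet x y) (fun c => c = ∅)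
    (fun c => (-(1/k) : ℝ) ^ c.card)
  have h1 : (chainSet x y).filter (fun c => c = ∅) = {∅} := by
    rw [Finset.filter_eq' (chainSet x y) ∅, if_pos (empty_mem_chainSet x y)]
  have h1' : ∑ c ∈ (chainSet x y).filter (fun c => c = ∅), (-(1/k) : ℝ) ^ c.card = 1 := by
    rw [h1, Finset.sum_singleton, Finset.card_empty, pow_zero]
  -- the sigma side
  have h2 : (-(1/k) : ℝ) * ∑ z ∈ O, Nk k x z
      = ∑ p ∈ O.sigma (fun z => chainSet x z), (-(1/k) : ℝ) ^ (p.2.card + 1) := by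
    rw [Finset.mul_sum]
    rw [← Finset.sum_sigma' O (fun z => chainSet x z)
      (fun z c => (-(1/k) : ℝ) ^ (c.card + 1))]
    refine Finset.sum_congr rfl (fun z _ => ?_)
    rw [Nk, Finset.mul_sum]
    refine Finset.sum_congr rfl (fun c _ => ?_)
    rw [pow_succ]
    ring
  have h3 : ∑ p ∈ O.sigma (fun z => chainSet x z), (-(1/k) : ℝ) ^ (p.2.card + 1)
      = ∑ c ∈ (chainSet x y).filter (fun c => ¬ c = ∅), (-(1/k) : ℝ) ^ c.card := by
    refine Finset.sum_nbij' (i := fun p => insert p.1 p.2)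
      (j := fun c => ⟨gmax x c, c.erase (gmax x c)⟩) ?_ ?_ ?_ ?_ ?_
    · -- i maps into target
      rintro ⟨z, c⟩ hp
      rw [Finset.mem_sigma] at hp
      obtain ⟨hz, hc⟩ := hp
      rw [hO, Finset.mem_filter] at hz
      obtain ⟨-, hxz, hzy⟩ := hz
      rw [chainSet, Finset.mem_filter] at hc
      obtain ⟨-, hcc, hmem⟩ := hc
      rw [Finset.mem_filter]
      refine ⟨?_, ?_⟩
      · rw [chainSet, Finset.mem_filter]
        refine ⟨Finset.mem_univ _, ?_, ?_⟩
        · rw [Finset.coe_insert]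
          exact hcc.insert (fun b hb _ => Or.inr (hmem b hb).2.le)
        · intro w hw
          rcases Finset.mem_insert.mp hw with rfl | hw'
          · exact ⟨hxz, hzy⟩
          · exact ⟨(hmem w hw').1, (hmem w hw').2.trans hzy⟩
      · exact Finset.insert_ne_empty _ _
    · -- j maps into source
      intro c hc
      rw [Finset.mem_filter] at hc
      obtain ⟨hc', hne⟩ := hc
      rw [chainSet, Finset.mem_filter] at hc'
      obtain ⟨-, hcc, hmem⟩ := hc'
      have hex := exists_greatest_of_chain hcc (Finset.nonempty_iff_ne_empty.mpr hne)
      obtain ⟨hg, hgmax⟩ := gmax_spec (x₀ := x) hex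
      rw [Finset.mem_sigma]
      constructor
      · rw [hO, Finset.mem_filter]
        exact ⟨Finset.mem_univ _, (hmem _ hg).1, (hmem _ hg).2⟩
      · rw [chainSet, Finset.mem_filter]
        refine ⟨Finset.mem_univ _, hcc.mono (by exact_mod_cast Finset.erase_subset _ _), ?_⟩
        intro w hw
        obtain ⟨hwne, hwc⟩ := Finset.mem_erase.mp hw
        exact ⟨(hmem w hwc).1, lt_of_le_of_ne (hgmax w hwc) hwne⟩
    · -- left inverse
      rintro ⟨z, c⟩ hp
      rw [Finset.mem_sigma] at hp
      obtain ⟨hz, hc⟩ := hp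
      rw [chainSet, Finset.mem_filter] at hc
      obtain ⟨-, -, hmem⟩ := hc
      have hznotin : z ∉ c := fun h => absurd (hmem z h).2 (lt_irrefl z)
      have hg : gmax x (insert z c) = z := by
        refine gmax_eq (Finset.mem_insert_self _ _) (fun b hb => ?_)
        rcases Finset.mem_insert.mp hb with rfl | hb'
        · exact le_rfl
        · exact (hmem b hb').2.le
      simp only [hg, Finset.erase_insert hznotin]
    · -- right inverse
      intro c hc
      rw [Finset.mem_filter] at hc
      obtain ⟨hc', hne⟩ := hc
      rw [chainSet, Finset.mem_filter] at hc'
      obtain ⟨-, hcc, -⟩ := hc'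
      have hex := exists_greatest_of_chain hcc (Finset.nonempty_iff_ne_empty.mpr hne)
      obtain ⟨hg, -⟩ := gmax_spec (x₀ := x) hex
      exact Finset.insert_erase hg
    · -- values agree
      rintro ⟨z, c⟩ hp
      rw [Finset.mem_sigma] at hp
      obtain ⟨hz, hc⟩ := hp
      rw [chainSet, Finset.mem_filter] at hc
      obtain ⟨-, -, hmem⟩ := hc
      have hznotin : z ∉ c := fun h => absurd (hmem z h).2 (lt_irrefl z)
      simp [Finset.card_insert_of_notMem hznotin]
  rw [Nk, ← hsplit, h1', h2, h3]

lemma card_filter_lt_of_lt {z y : P} (h : z < y) :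
    (Finset.univ.filter (· < z)).card < (Finset.univ.filter (· < y)).card := by
  apply Finset.card_lt_card
  rw [Finset.ssubset_iff_of_subset]
  · exact ⟨z, Finset.mem_filter.mpr ⟨Finset.mem_univ _, h⟩,
      fun hc => absurd (Finset.mem_filter.mp hc).2 (lt_irrefl _)⟩
  · intro w hw
    exact Finset.mem_filter.mpr ⟨Finset.mem_univ _, (Finset.mem_filter.mp hw).2.trans h⟩

lemma muk_eq_neg_Nk (k : ℝ) :
    ∀ (m : ℕ) (y x : P), (Finset.univ.filter (· < y)).card ≤ m → x < y →
      muk k x y = - Nk k x y := by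
  intro m
  induction m using Nat.strong_induction_on with
  | _ m IH =>
    intro y x hcard hxy
    rw [muk, if_neg hxy.ne]
    rw [Finset.sum_attach _ (fun z => muk k x z)]
    have hz : ∀ z ∈ Finset.univ.filter (fun z => x < z ∧ z < y),
        muk k x z = - Nk k x z := by
      intro z hz
      obtain ⟨-, hxz, hzy⟩ := Finset.mem_filter.mp hz
      exact IH (Finset.univ.filter (· < z)).card
        (lt_of_lt_of_le (card_filter_lt_of_lt hzy) hcard) z x le_rfl hxz
    rw [Finset.sum_congr rfl hz, Finset.sum_neg_distrib, Nk_rec]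
    ring

lemma rank_lt_of_lt {ρ : P → ℕ} (hρ : ∀ a b : P, a ⋖ b → ρ b = ρ a + 1) :
    ∀ y x : P, x < y → ρ x < ρ y := by
  intro y
  induction y using WellFoundedLT.induction with
  | _ y IH =>
    intro x hxy
    obtain ⟨w, hxw, hwy⟩ := exists_le_covBy_of_lt hxy
    rw [hρ w y hwy]
    rcases eq_or_lt_of_le hxw with rfl | h
    · exact Nat.lt_succ_self _
    · exact (IH w hwy.lt x h).trans (Nat.lt_succ_self _)

end HallAux

/-- `μ_k(P) = -∑_{S ⊆ [1,n]} (-1/k)^{|S|} f_S(P)`. -/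
theorem muk_eq_neg_sum {P : Type} [PartialOrder P] [BoundedOrder P] [Finite P]
    (n : ℕ) (ρ : P → ℕ) (hP : IsGraded P ρ n) (k : ℝ) (hk : 0 < k) :
    muk k (⊥ : P) ⊤ =
      -∑ S ∈ (Finset.Icc 1 n).powerset, (-(1/k)) ^ S.card * (flagNum ρ S : ℝ) := by
  obtain ⟨hbot, htop, hcov⟩ := hP
  have hrk : ∀ y x : P, x < y → ρ x < ρ y := rank_lt_of_lt hcov
  have hbt : (⊥ : P) < ⊤ := by
    refine lt_of_le_of_ne bot_le (fun h => ?_)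
    rw [h, htop] at hbot
    omega
  rw [muk_eq_neg_Nk k _ ⊤ ⊥ le_rfl hbt]
  congr 1
  have hmaps : ∀ c ∈ chainSet (⊥ : P) ⊤, c.image ρ ∈ (Finset.Icc 1 n).powerset := by
    intro c hc
    obtain ⟨-, -, hmem⟩ := Finset.mem_filter.mp hc
    rw [Finset.mem_powerset]
    intro r hr
    obtain ⟨z, hz, rfl⟩ := Finset.mem_image.mp hr
    obtain ⟨h1, h2⟩ := hmem z hz
    have r1 : ρ (⊥ : P) < ρ z := hrk z ⊥ h1
    have r2 : ρ z < ρ (⊤ : P) := hrk ⊤ z h2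
    rw [hbot] at r1; rw [htop] at r2
    rw [Finset.mem_Icc]
    omega
  rw [Nk, ← Finset.sum_fiberwise_of_maps_to hmaps (fun c => (-(1/k) : ℝ) ^ c.card)]
  refine Finset.sum_congr rfl (fun S hS => ?_)
  have hSsub : S ⊆ Finset.Icc 1 n := Finset.mem_powerset.mp hS
  -- injectivity of ρ on chains
  have hinj : ∀ c : Finset P, IsChain (· ≤ ·) (c : Set P) → Set.InjOn ρ (c : Set P) := by
    intro c hc a ha b hb hab
    by_contra hne
    rcases hc ha hb hne with h | h
    · exact absurd hab (hrk b a (lt_of_le_of_ne h hne)).ne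
    · exact absurd hab.symm (hrk a b (lt_of_le_of_ne h (Ne.symm hne))).ne
  have hfib : (chainSet (⊥ : P) ⊤).filter (fun c => c.image ρ = S)
      = Finset.univ.filter (fun c : Finset P =>
          IsChain (· ≤ ·) (c : Set P) ∧ c.image ρ = S ∧ c.card = S.card) := by
    ext c
    simp only [Finset.mem_filter, chainSet, Finset.mem_univ, true_and]
    constructor
    · rintro ⟨⟨hcc, -⟩, himg⟩
      refine ⟨hcc, himg, ?_⟩
      rw [← himg, Finset.card_image_of_injOn (hinj c hcc)]
    · rintro ⟨hcc, himg, hcard⟩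
      refine ⟨⟨hcc, fun z hz => ?_⟩, himg⟩
      have hρz : ρ z ∈ S := himg ▸ Finset.mem_image_of_mem ρ hz
      obtain ⟨h1, h2⟩ := Finset.mem_Icc.mp (hSsub hρz)
      constructor
      · refine lt_of_le_of_ne bot_le (fun h => ?_)
        rw [← h, hbot] at h1
        omega
      · refine lt_of_le_of_ne le_top (fun h => ?_)
        rw [h, htop] at h2
        omega
  have hcards : ∀ c ∈ (chainSet (⊥ : P) ⊤).filter (fun c => c.image ρ = S),
      (-(1/k) : ℝ) ^ c.card = (-(1/k) : ℝ) ^ S.card := by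
    intro c hc
    obtain ⟨hc', himg⟩ := Finset.mem_filter.mp hc
    obtain ⟨-, hcc, -⟩ := Finset.mem_filter.mp hc'
    rw [← himg, Finset.card_image_of_injOn (hinj c hcc)]
  rw [Finset.sum_congr rfl hcards, Finset.sum_const, hfib]
  rw [flagNum, nsmul_eq_mul, mul_comm]
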